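/- Let R₀ ∈ ℝ^{d_v×d_k} and define R_i by the recurrence R_i = α_i R_{i-1}(I - β_i k_i k_iᵀ) + β_i v_i k_iᵀ for i = 1,…,C. Then there exist vectors û₁,…,û_C ∈ ℝ^{d_v} such that R_i = (∏_{r=1}^{i} α_r) R₀ + Σ_{r=1}^{i} (∏_{s=r+1}^{i} α_s) û_r k_rᵀ for all i; moreover û_r = u_r - R₀ w_r where u_r and w_r are given by the WY recurrences u_i = β_i(v_i - Σ_{r<i} u_r k_rᵀ(∏_{s=r+1}^{i}α_s)k_i) and w_i = β_i((∏_{s=1}^{i}α_s) k_i - Σ_{r<i} w_r k_rᵀ(∏_{s=r+1}^{i}α_s)k_i). -/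

import Mathlib

open Matrix

lemma wy_mul_vecMulVec {m n p : Type*} [Fintype n] (M : Matrix m n ℝ) (c : n → ℝ) (d : p → ℝ) :
    M * vecMulVec c d = vecMulVec (M.mulVec c) d := by
  ext x y
  simp [Matrix.mul_apply, vecMulVec_apply, mulVec, dotProduct, Finset.sum_mul, mul_assoc]

lemma wy_vecMulVec_mulVec {m n : Type*} [Fintype n] (a : m → ℝ) (b c : n → ℝ) :
    (vecMulVec a b).mulVec c = (b ⬝ᵥ c) • a := by
  ext x
  simp only [mulVec, vecMulVec, dotProduct, of_apply, Pi.smul_apply, smul_eq_mul,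
    Finset.sum_mul]
  exact Finset.sum_congr rfl fun j _ => by ring

lemma wy_vecMulVec_add {m n : Type*} (a a' : m → ℝ) (b : n → ℝ) :
    vecMulVec (a + a') b = vecMulVec a b + vecMulVec a' b := by
  ext x y; simp [vecMulVec_apply, add_mul]

lemma wy_vecMulVec_sub {m n : Type*} (a a' : m → ℝ) (b : n → ℝ) :
    vecMulVec (a - a') b = vecMulVec a b - vecMulVec a' b := by
  ext x y; simp [vecMulVec_apply, sub_mul]

lemma wy_vecMulVec_smul {m n : Type*} (c : ℝ) (a : m → ℝ) (b : n → ℝ) :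
    vecMulVec (c • a) b = c • vecMulVec a b := by
  ext x y; simp [vecMulVec_apply, mul_assoc]

lemma wy_sum_mulVec {m n : Type*} [Fintype n] (s : Finset ℕ) (f : ℕ → Matrix m n ℝ) (x : n → ℝ) :
    (∑ r ∈ s, f r).mulVec x = ∑ r ∈ s, (f r).mulVec x := by
  induction s using Finset.induction with
  | empty => simp [Matrix.zero_mulVec]
  | insert _ _ h ih => simp [Finset.sum_insert h, Matrix.add_mulVec, ih]

lemma wy_mulVec_sum {m n : Type*} [Fintype n] (M : Matrix m n ℝ) (s : Finset ℕ) (f : ℕ → n → ℝ) :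
    M.mulVec (∑ r ∈ s, f r) = ∑ r ∈ s, M.mulVec (f r) := by
  induction s using Finset.induction with
  | empty => simp [Matrix.mulVec_zero]
  | insert _ _ h ih => simp [Finset.sum_insert h, Matrix.mulVec_add, ih]

/-- Combined WY representation of the transposed delta-rule state recurrence
`R_i = α_i R_{i-1}(I - β_i k_i k_iᵀ) + β_i v_i k_iᵀ`: there exist vectors
`û_r` with `R_i = (∏_{r≤i} α_r) R₀ + Σ_{r≤i} (∏_{s=r+1}^{i} α_s) û_r k_rᵀ`,
and `û_r = u_r - R₀ w_r` for the WY auxiliary vectors `u_r`, `w_r`. -/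
theorem combined_wy_representation {C dk dv : ℕ}
    (α β : ℕ → ℝ) (k : ℕ → Fin dk → ℝ) (v : ℕ → Fin dv → ℝ)
    (R : ℕ → Matrix (Fin dv) (Fin dk) ℝ)
    (hR : ∀ i, R (i + 1) =
      α (i + 1) • (R i * ((1 : Matrix (Fin dk) (Fin dk) ℝ)
          - β (i + 1) • vecMulVec (k (i + 1)) (k (i + 1))))
        + β (i + 1) • vecMulVec (v (i + 1)) (k (i + 1)))
    (u : ℕ → Fin dv → ℝ)
    (hu : ∀ i, 1 ≤ i → i ≤ C →
      u i = β i • (v i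
        - ∑ r ∈ Finset.Icc 1 (i - 1),
            (k r ⬝ᵥ ((∏ s ∈ Finset.Icc (r + 1) i, α s) • k i)) • u r))
    (w : ℕ → Fin dk → ℝ)
    (hw : ∀ i, 1 ≤ i → i ≤ C →
      w i = β i • ((∏ s ∈ Finset.Icc 1 i, α s) • k i
        - ∑ r ∈ Finset.Icc 1 (i - 1),
            (k r ⬝ᵥ ((∏ s ∈ Finset.Icc (r + 1) i, α s) • k i)) • w r)) :
    ∃ uhat : ℕ → Fin dv → ℝ,
      (∀ i, i ≤ C →
        R i = (∏ r ∈ Finset.Icc 1 i, α r) • R 0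
          + ∑ r ∈ Finset.Icc 1 i,
              (∏ s ∈ Finset.Icc (r + 1) i, α s) • vecMulVec (uhat r) (k r)) ∧
      (∀ r, 1 ≤ r → r ≤ C → uhat r = u r - (R 0).mulVec (w r)) := by
  refine ⟨fun r => u r - (R 0).mulVec (w r), ?_, fun r _ _ => rfl⟩
  set uhat : ℕ → Fin dv → ℝ := fun r => u r - (R 0).mulVec (w r) with huhat
  intro i hi
  induction i with
  | zero => simp [Finset.Icc_eq_empty (by omega : ¬(1:ℕ) ≤ 0)]
  | succ n ih =>
    have hn : n ≤ C := Nat.le_of_succ_le hi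
    have IH := ih hn
    have h1 : (1:ℕ) ≤ n + 1 := by omega
    have hprod : ∏ r ∈ Finset.Icc 1 (n+1), α r = (∏ r ∈ Finset.Icc 1 n, α r) * α (n+1) :=
      Finset.prod_Icc_succ_top h1 _
    have hempty : (∏ s ∈ Finset.Icc (n+1+1) (n+1), α s) = 1 := by
      rw [Finset.Icc_eq_empty (by omega), Finset.prod_empty]
    -- the key vector computation: (R n).mulVec (k (n+1))
    have hRnk : (R n).mulVec (k (n+1))
        = (∏ r ∈ Finset.Icc 1 n, α r) • (R 0).mulVec (k (n+1))
          + ∑ r ∈ Finset.Icc 1 n,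
              ((∏ s ∈ Finset.Icc (r+1) n, α s) * (k r ⬝ᵥ k (n+1))) • uhat r := by
      rw [IH, Matrix.add_mulVec, Matrix.smul_mulVec, wy_sum_mulVec]
      congr 1
      refine Finset.sum_congr rfl fun r _ => ?_
      rw [Matrix.smul_mulVec, wy_vecMulVec_mulVec, smul_smul]
    have hd : ∀ r ∈ Finset.Icc 1 n,
        (k r ⬝ᵥ ((∏ s ∈ Finset.Icc (r + 1) (n+1), α s) • k (n+1)))
          = α (n+1) * ((∏ s ∈ Finset.Icc (r+1) n, α s) * (k r ⬝ᵥ k (n+1))) := by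
      intro r hr
      have hr' : r ≤ n := (Finset.mem_Icc.mp hr).2
      rw [Finset.prod_Icc_succ_top (by omega : r + 1 ≤ n + 1), dotProduct_smul]
      simp only [smul_eq_mul]; ring
    -- uhat (n+1) in closed form
    have hkey : uhat (n+1)
        = β (n+1) • (v (n+1) - α (n+1) • (R n).mulVec (k (n+1))) := by
      have hu' := hu (n+1) h1 hi
      have hw' := hw (n+1) h1 hi
      simp only [Nat.add_sub_cancel] at hu' hw'
      have hsumu : (∑ r ∈ Finset.Icc 1 n,
            (k r ⬝ᵥ ((∏ s ∈ Finset.Icc (r + 1) (n+1), α s) • k (n+1))) • u r)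
          = ∑ r ∈ Finset.Icc 1 n,
              (α (n+1) * ((∏ s ∈ Finset.Icc (r+1) n, α s) * (k r ⬝ᵥ k (n+1)))) • u r :=
        Finset.sum_congr rfl fun r hr => by rw [hd r hr]
      have hsumw : (∑ r ∈ Finset.Icc 1 n,
            (R 0).mulVec ((k r ⬝ᵥ ((∏ s ∈ Finset.Icc (r + 1) (n+1), α s) • k (n+1))) • w r))
          = ∑ r ∈ Finset.Icc 1 n,
              (α (n+1) * ((∏ s ∈ Finset.Icc (r+1) n, α s) * (k r ⬝ᵥ k (n+1)))) •
                (R 0).mulVec (w r) :=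
        Finset.sum_congr rfl fun r hr => by rw [hd r hr, Matrix.mulVec_smul]
      rw [huhat]
      simp only [hu', hw', hRnk]
      rw [Matrix.mulVec_smul, Matrix.mulVec_sub, Matrix.mulVec_smul, wy_mulVec_sum,
        ← smul_sub]
      congr 1
      rw [hprod, hsumu, hsumw, smul_add, Finset.smul_sum]
      simp only [smul_smul, huhat, smul_sub]
      rw [Finset.sum_sub_distrib]
      module
    -- combine the last rank-one write
    have hlast : vecMulVec (uhat (n+1)) (k (n+1))
        = β (n+1) • vecMulVec (v (n+1)) (k (n+1))
          - α (n+1) • (β (n+1) • vecMulVec ((R n).mulVec (k (n+1))) (k (n+1))) := by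
      rw [hkey, wy_vecMulVec_smul, wy_vecMulVec_sub, wy_vecMulVec_smul]
      module
    have hsum2 : (∑ r ∈ Finset.Icc 1 n,
          (∏ s ∈ Finset.Icc (r + 1) (n+1), α s) • vecMulVec (uhat r) (k r))
        = α (n+1) • ∑ r ∈ Finset.Icc 1 n,
            (∏ s ∈ Finset.Icc (r + 1) n, α s) • vecMulVec (uhat r) (k r) := by
      rw [Finset.smul_sum]
      refine Finset.sum_congr rfl fun r hr => ?_
      have hr' : r ≤ n := (Finset.mem_Icc.mp hr).2
      rw [Finset.prod_Icc_succ_top (by omega : r + 1 ≤ n + 1), smul_smul, mul_comm]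
    -- the main matrix identity
    rw [hR n, Matrix.mul_sub, Matrix.mul_one, Matrix.mul_smul, wy_mul_vecMulVec, smul_sub]
    rw [Finset.sum_Icc_succ_top h1, hprod, hempty, one_smul, hsum2, hlast, IH]
    module
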